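/- Let T be a tree containing a path v_1 v_2 ... v_r with r ≥ 3, where v_1 and v_r are leaves of T. Then there exists an index i with 1 < i < r such that f_T(v_1) < ... < f_T(v_{i-1}) < f_T(v_i) ≥ f_T(v_{i+1}) > ... > f_T(v_r). -/

import Mathlib

open SimpleGraph

/-- The number of subtrees of `G` containing the vertex `v`. -/
noncomputable def numSubtreesContaining {V : Type*} [Fintype V] (G : SimpleGraph V) (v : V) : ℕ :=
  {S : Set V | v ∈ S ∧ (G.induce S).Connected}.ncard

section Aux

variable {V : Type*} [Fintype V] {G : SimpleGraph V}

lemma aux_singleton_connected (v : V) : (G.induce {v}).Connected := by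
  haveI : Nonempty ↥({v} : Set V) := ⟨⟨v, rfl⟩⟩
  rw [induce_singleton_eq_top]
  exact connected_top

lemma aux_insert_connected {S : Set V} {u v : V} (hS : (G.induce S).Connected)
    (hu : u ∈ S) (huv : G.Adj u v) : (G.induce (insert v S)).Connected := by
  have h : insert v S = S ∪ {u, v} := by
    ext x; simp only [Set.mem_insert_iff, Set.mem_union]; aesop
  rw [h]
  exact induce_union_connected hS.preconnected (induce_pair_connected_of_adj huv).preconnected
    ⟨u, hu, by simp⟩

lemma aux_exists_walk {S : Set V} {u w : V} (hS : (G.induce S).Connected)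
    (hu : u ∈ S) (hw : w ∈ S) : ∃ wk : G.Walk u w, ∀ x ∈ wk.support, x ∈ S := by
  obtain ⟨wk⟩ := hS.preconnected ⟨u, hu⟩ ⟨w, hw⟩
  refine ⟨wk.map (Embedding.induce S).toHom, fun x hx => ?_⟩
  replace hx : x ∈ wk.support.map (Embedding.induce (G := G) S).toHom := by rwa [← Walk.support_map]
  rw [List.mem_map] at hx
  obtain ⟨a, _, rfl⟩ := hx
  exact a.2

lemma aux_mem_of_tree {S : Set V} {u v w : V} (hG : G.IsTree)
    (huv : G.Adj u v) (hvw : G.Adj v w) (huw : u ≠ w)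
    (hS : (G.induce S).Connected) (hu : u ∈ S) (hw : w ∈ S) : v ∈ S := by
  classical
  obtain ⟨wk, hwk⟩ := aux_exists_walk hS hu hw
  have hpath : (Walk.cons huv (Walk.cons hvw Walk.nil)).IsPath := by
    rw [Walk.isPath_def]
    simp [huv.ne, hvw.ne, huw]
  have := (hG.existsUnique_path u w).unique (wk.toPath.2) hpath
  have hv : v ∈ (wk.toPath : G.Walk u w).support := by
    rw [this]; simp
  exact hwk v (wk.support_toPath_subset hv)

lemma aux_leaf_eq {u v : V} (hleaf : (G.neighborSet u).ncard = 1) (huv : G.Adj u v) :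
    {S : Set V | u ∈ S ∧ v ∉ S ∧ (G.induce S).Connected} = {{u}} := by
  have hnbr : G.neighborSet u = {v} := by
    obtain ⟨a, ha⟩ := Set.ncard_eq_one.mp hleaf
    have : v ∈ G.neighborSet u := huv
    rw [ha] at this ⊢
    rw [Set.mem_singleton_iff.mp this]
  ext S
  simp only [Set.mem_setOf_eq, Set.mem_singleton_iff]
  constructor
  · rintro ⟨hu, hv, hconn⟩
    ext x
    simp only [Set.mem_singleton_iff]
    constructor
    · intro hx
      by_contra hxu
      obtain ⟨wk, hwk⟩ := aux_exists_walk hconn hu hx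
      cases wk with
      | nil => exact hxu rfl
      | cons h q =>
        rename_i b
        have hb : b ∈ G.neighborSet u := h
        rw [hnbr, Set.mem_singleton_iff] at hb
        exact hv (hb ▸ hwk b (by simp [Walk.support_cons, q.start_mem_support]))
    · rintro rfl; exact hu
  · rintro rfl
    exact ⟨rfl, fun h => huv.ne (Set.mem_singleton_iff.mp h).symm, aux_singleton_connected u⟩

lemma aux_key {u v w : V} (hG : G.IsTree)
    (huv : G.Adj u v) (hvw : G.Adj v w) (huw : u ≠ w) :
    {S : Set V | u ∈ S ∧ v ∉ S ∧ (G.induce S).Connected}.ncard <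
    {S : Set V | v ∈ S ∧ w ∉ S ∧ (G.induce S).Connected}.ncard := by
  set A := {S : Set V | u ∈ S ∧ v ∉ S ∧ (G.induce S).Connected} with hA
  set B := {S : Set V | v ∈ S ∧ w ∉ S ∧ (G.induce S).Connected} with hB
  have himg : (insert v ·) '' A ⊆ B := by
    rintro _ ⟨S, ⟨hu, hv, hconn⟩, rfl⟩
    refine ⟨Set.mem_insert v S, ?_, aux_insert_connected hconn hu huv⟩
    rintro (h | h)
    · exact hvw.ne h.symm
    · exact hv (aux_mem_of_tree hG huv hvw huw hconn hu h)
  have hvB : ({v} : Set V) ∈ B :=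
    ⟨rfl, fun h => hvw.ne (Set.mem_singleton_iff.mp h).symm, aux_singleton_connected v⟩
  have hvnimg : ({v} : Set V) ∉ (insert v ·) '' A := by
    rintro ⟨S, ⟨hu, hv, _⟩, hins⟩
    have : u ∈ ({v} : Set V) := hins ▸ Set.mem_insert_iff.mpr (Or.inr hu)
    exact huv.ne (Set.mem_singleton_iff.mp this)
  have hinjOn : Set.InjOn (insert v ·) A := by
    rintro S₁ ⟨_, h₁, _⟩ S₂ ⟨_, h₂, _⟩ h
    have := congrArg (· \ {v}) h
    simpa [Set.insert_diff_self_of_notMem, h₁, h₂] using this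
  calc A.ncard = ((insert v ·) '' A).ncard := (Set.ncard_image_of_injOn hinjOn).symm
    _ < B.ncard := by
        refine Set.ncard_lt_ncard ?_ (Set.toFinite B)
        rw [Set.ssubset_def]
        exact ⟨himg, fun hsub => hvnimg (hsub hvB)⟩

noncomputable def sideCount (G : SimpleGraph V) (a b : V) : ℕ :=
  {S : Set V | a ∈ S ∧ b ∉ S ∧ (G.induce S).Connected}.ncard

lemma aux_key' (hG : G.IsTree) {u v w : V}
    (huv : G.Adj u v) (hvw : G.Adj v w) (huw : u ≠ w) :
    sideCount G u v < sideCount G v w := aux_key hG huv hvw huw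

lemma aux_leaf' {u v : V} (hleaf : (G.neighborSet u).ncard = 1) (huv : G.Adj u v) :
    sideCount G u v = 1 := by
  rw [sideCount, aux_leaf_eq hleaf huv, Set.ncard_singleton]

lemma aux_two' {u v w : V} (huv : G.Adj u v) (hvw : G.Adj v w) (huw : u ≠ w) :
    2 ≤ sideCount G v u := by
  rw [sideCount]
  refine (Set.one_lt_ncard (Set.toFinite _)).mpr
    ⟨{v}, ⟨rfl, fun h => huv.ne (Set.mem_singleton_iff.mp h), aux_singleton_connected v⟩,
     {v, w}, ⟨Or.inl rfl, ?_, induce_pair_connected_of_adj hvw⟩, ?_⟩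
  · rintro (h | h)
    · exact huv.ne h
    · exact huw h
  · intro h
    have : w ∈ ({v} : Set V) := h ▸ (Or.inr rfl : w ∈ ({v, w} : Set V))
    exact hvw.ne (Set.mem_singleton_iff.mp this).symm

lemma aux_split' (u v : V) :
    numSubtreesContaining G u + sideCount G v u
      = numSubtreesContaining G v + sideCount G u v := by
  classical
  have hsplit : ∀ a b : V, numSubtreesContaining G a
      = sideCount G a b + {S : Set V | a ∈ S ∧ b ∈ S ∧ (G.induce S).Connected}.ncard := by
    intro a b
    rw [numSubtreesContaining, sideCount]
    rw [← Set.ncard_union_eq ?_ (Set.toFinite _) (Set.toFinite _)]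
    · congr 1
      ext S
      simp only [Set.mem_setOf_eq, Set.mem_union]
      by_cases h : b ∈ S <;> tauto
    · rw [Set.disjoint_left]
      rintro S ⟨_, h1, _⟩ ⟨_, h2, _⟩
      exact h1 h2
  have hC : {S : Set V | u ∈ S ∧ v ∈ S ∧ (G.induce S).Connected}
      = {S : Set V | v ∈ S ∧ u ∈ S ∧ (G.induce S).Connected} := by
    ext S; simp only [Set.mem_setOf_eq]; tauto
  rw [hsplit u v, hsplit v u, hC]
  ring

end Aux

/-- If `p 0, p 1, ..., p (r-1)` is a path in the tree `G` whose endpoints are leaves of `G`,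
then there is an internal index `i` where `f_G` along the path increases strictly before `i`,
weakly decreases from `i` to `i+1`, and decreases strictly afterwards. -/
theorem unimodal_along_path {V : Type*} [Fintype V] (G : SimpleGraph V)
    (hG : G.IsTree) (r : ℕ) (hr : 3 ≤ r) (p : ℕ → V)
    (hadj : ∀ i, i < r - 1 → G.Adj (p i) (p (i + 1)))
    (hinj : ∀ i j, i < r → j < r → p i = p j → i = j)
    (hleaf0 : (G.neighborSet (p 0)).ncard = 1)
    (hleafr : (G.neighborSet (p (r - 1))).ncard = 1) :
    ∃ i, 0 < i ∧ i < r - 1 ∧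
      (∀ j, j < i → numSubtreesContaining G (p j) < numSubtreesContaining G (p (j + 1))) ∧
      numSubtreesContaining G (p (i + 1)) ≤ numSubtreesContaining G (p i) ∧
      (∀ j, i < j → j < r - 1 →
        numSubtreesContaining G (p (j + 1)) < numSubtreesContaining G (p j)) := by
  classical
  have hnep : ∀ a b, a < r → b < r → a ≠ b → p a ≠ p b :=
    fun a b ha hb hab h => hab (hinj a b ha hb h)
  -- forward key: A j < A (j+1)
  have hAmono : ∀ j, j + 2 < r →
      sideCount G (p j) (p (j + 1)) < sideCount G (p (j + 1)) (p (j + 2)) := by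
    intro j hj
    exact aux_key' hG (hadj j (by omega)) (hadj (j + 1) (by omega))
      (hnep j (j + 2) (by omega) (by omega) (by omega))
  -- backward key: B (j+1) < B j
  have hBmono : ∀ j, j + 2 < r →
      sideCount G (p (j + 2)) (p (j + 1)) < sideCount G (p (j + 1)) (p j) := by
    intro j hj
    exact aux_key' hG (hadj (j + 1) (by omega)).symm (hadj j (by omega)).symm
      (hnep (j + 2) j (by omega) (by omega) (by omega))
  have hsum : ∀ j, numSubtreesContaining G (p j) + sideCount G (p (j + 1)) (p j)
      = numSubtreesContaining G (p (j + 1)) + sideCount G (p j) (p (j + 1)) :=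
    fun j => aux_split' (p j) (p (j + 1))
  have hA0 : sideCount G (p 0) (p 1) = 1 := aux_leaf' hleaf0 (hadj 0 (by omega))
  have hB0 : 2 ≤ sideCount G (p 1) (p 0) :=
    aux_two' (hadj 0 (by omega)) (hadj 1 (by omega))
      (hnep 0 2 (by omega) (by omega) (by omega))
  have e1 : r - 2 + 1 = r - 1 := by omega
  have e2 : r - 3 + 1 = r - 2 := by omega
  have hBlast : sideCount G (p (r - 2 + 1)) (p (r - 2)) = 1 := by
    rw [e1]
    exact aux_leaf' hleafr (by
      have := hadj (r - 2) (by omega)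
      rw [e1] at this
      exact this.symm)
  have hAlast : 2 ≤ sideCount G (p (r - 2)) (p (r - 2 + 1)) := by
    rw [e1]
    have h1 : G.Adj (p (r - 1)) (p (r - 2)) := by
      have := hadj (r - 2) (by omega); rw [e1] at this; exact this.symm
    have h2 : G.Adj (p (r - 2)) (p (r - 3)) := by
      have := hadj (r - 3) (by omega); rw [e2] at this; exact this.symm
    exact aux_two' h1 h2 (hnep (r - 1) (r - 3) (by omega) (by omega) (by omega))
  -- P j : the difference is non-increasing at step j
  have hex : ∃ j, sideCount G (p (j + 1)) (p j) ≤ sideCount G (p j) (p (j + 1)) :=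
    ⟨r - 2, by omega⟩
  set i := Nat.find hex with hi
  have hPi : sideCount G (p (i + 1)) (p i) ≤ sideCount G (p i) (p (i + 1)) :=
    Nat.find_spec hex
  have hmin : ∀ j, j < i →
      sideCount G (p j) (p (j + 1)) < sideCount G (p (j + 1)) (p j) := by
    intro j hj
    have := Nat.find_min hex hj
    omega
  have hi_le : i ≤ r - 2 := Nat.find_le (by omega)
  have hi_pos : 0 < i := by
    rcases Nat.eq_zero_or_pos i with h0 | h
    · exfalso
      have := hPi
      rw [h0] at this
      norm_num at this
      omega
    · exact h
  -- the strict decrease claim past i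
  have claim : ∀ j, i ≤ j → j ≤ r - 2 →
      sideCount G (p (j + 1)) (p j) ≤ sideCount G (p j) (p (j + 1)) ∧
      (i < j → sideCount G (p (j + 1)) (p j) < sideCount G (p j) (p (j + 1))) := by
    intro j hij
    induction j, hij using Nat.le_induction with
    | base => exact fun _ => ⟨hPi, fun h => absurd h (lt_irrefl i)⟩
    | succ j hij IH =>
      intro hj1
      have hIH := IH (by omega)
      have hb := hBmono j (by omega)
      have ha := hAmono j (by omega)
      rw [show j + 1 + 1 = j + 2 from rfl]
      constructor
      · omega
      · intro _; omega
  refine ⟨i, hi_pos, by omega, ?_, ?_, ?_⟩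
  · intro j hj
    have h1 := hmin j hj
    have h2 := hsum j
    omega
  · have := hsum i
    omega
  · intro j hij hjr
    have h1 := (claim j (by omega) (by omega)).2 hij
    have h2 := hsum j
    omega
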